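/- Let m ≥ 3 be an integer such that m is odd or m ≡ 2 (mod 4). Then for every n ∈ ℤ_2 (the ring of 2-adic integers) there exists x ∈ ℤ_2 such that (m−2)x² − (m−4)x = 2n; that is, the generalized m-gonal polynomial P_m(x) = ((m−2)x² − (m−4)x)/2 represents every 2-adic integer over ℤ_2. -/

import Mathlib

open Polynomial

lemma key2 (A B D a : ℤ_[2]) (h1 : (2 : ℤ_[2]) ∣ (A * a ^ 2 - B * a - D))
    (h2 : ¬ (2 : ℤ_[2]) ∣ (2 * A * a - B)) :
    ∃ z : ℤ_[2], A * z ^ 2 - B * z - D = 0 := by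
  set F : Polynomial ℤ_[2] := C A * X ^ 2 - C B * X - C D with hF
  have heval : ∀ y : ℤ_[2], F.eval y = A * y ^ 2 - B * y - D := by
    intro y; simp [hF]
  have hderiv : ∀ y : ℤ_[2], F.derivative.eval y = 2 * A * y - B := by
    intro y
    simp [hF]
    ring
  have hd1 : ‖F.derivative.eval a‖ = 1 := by
    have hle : ‖F.derivative.eval a‖ ≤ 1 := PadicInt.norm_le_one _
    have hnlt : ¬ ‖F.derivative.eval a‖ < 1 := by
      rw [PadicInt.norm_lt_one_iff_dvd]
      rw [hderiv]
      exact_mod_cast h2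
    linarith [lt_or_eq_of_le hle |>.resolve_left hnlt]
  have hnorm : ‖F.eval a‖ < ‖F.derivative.eval a‖ ^ 2 := by
    rw [hd1, one_pow]
    rw [heval] at *
    rw [PadicInt.norm_lt_one_iff_dvd]
    exact_mod_cast h1
  obtain ⟨z, hz, -⟩ := hensels_lemma hnorm
  exact ⟨z, by rw [Polynomial.coe_aeval_eq_eval, heval] at hz; exact hz⟩

theorem stmt14 (m : ℤ) (hm : 3 ≤ m) (hcond : Odd m ∨ m % 4 = 2) :
    ∀ n : ℤ_[2], ∃ x : ℤ_[2],
      ((m - 2 : ℤ) : ℤ_[2]) * x ^ 2 - ((m - 4 : ℤ) : ℤ_[2]) * x = 2 * n := by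
  intro n
  rcases hcond with hodd | h4
  · -- m odd
    have hB : ¬ (2 : ℤ) ∣ (m - 4) := by
      obtain ⟨k, hk⟩ := hodd; omega
    have h1 : (2 : ℤ_[2]) ∣ (((m - 2 : ℤ) : ℤ_[2]) * 0 ^ 2 - ((m - 4 : ℤ) : ℤ_[2]) * 0 - 2 * n) := by
      refine ⟨-n, ?_⟩; ring
    have h2 : ¬ (2 : ℤ_[2]) ∣ (2 * ((m - 2 : ℤ) : ℤ_[2]) * 0 - ((m - 4 : ℤ) : ℤ_[2])) := by
      intro hdvd
      have : (2 : ℤ_[2]) ∣ ((m - 4 : ℤ) : ℤ_[2]) := dvd_neg.mp (by simpa using hdvd)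
      have hlt : ‖((m - 4 : ℤ) : ℤ_[2])‖ < 1 := by
        rw [PadicInt.norm_lt_one_iff_dvd]; exact_mod_cast this
      rw [PadicInt.norm_int_lt_one_iff_dvd] at hlt
      exact hB (by exact_mod_cast hlt)
    obtain ⟨z, hz⟩ := key2 _ _ _ _ h1 h2
    exact ⟨z, by linear_combination hz⟩
  · -- m ≡ 2 mod 4
    set s : ℤ := (m - 2) / 2 with hs_def
    set t : ℤ := (m - 4) / 2 with ht_def
    have hs : m - 2 = 2 * s := by omega
    have hs2 : (2 : ℤ) ∣ s := by omega
    have ht : m - 4 = 2 * t := by omega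
    have ht2 : ¬ (2 : ℤ) ∣ t := by omega
    set a : ℤ_[2] := ((n.appr 1 : ℕ) : ℤ_[2]) with ha_def
    have hdan : (2 : ℤ_[2]) ∣ (a - n) := by
      have := n.appr_spec 1
      rw [Ideal.mem_span_singleton, pow_one] at this
      have : ((2 : ℕ) : ℤ_[2]) ∣ (n - a) := this
      have h2' : (2 : ℤ_[2]) ∣ (n - a) := by exact_mod_cast this
      simpa [neg_sub] using dvd_neg.mpr h2'
    have h1 : (2 : ℤ_[2]) ∣ ((s : ℤ_[2]) * a ^ 2 - (t : ℤ_[2]) * a - n) := by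
      have heq : (s : ℤ_[2]) * a ^ 2 - (t : ℤ_[2]) * a - n =
          (s : ℤ_[2]) * a ^ 2 - ((t + 1 : ℤ) : ℤ_[2]) * a + (a - n) := by
        push_cast; ring
      rw [heq]
      refine dvd_add (dvd_sub ?_ ?_) hdan
      · have : ((2 : ℤ) : ℤ_[2]) ∣ ((s : ℤ) : ℤ_[2]) := map_dvd (Int.castRingHom ℤ_[2]) hs2
        exact (by exact_mod_cast this : (2 : ℤ_[2]) ∣ (s : ℤ_[2])).mul_right _
      · have h2t : (2 : ℤ) ∣ (t + 1) := by omega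
        have : ((2 : ℤ) : ℤ_[2]) ∣ ((t + 1 : ℤ) : ℤ_[2]) := map_dvd (Int.castRingHom ℤ_[2]) h2t
        exact (by exact_mod_cast this : (2 : ℤ_[2]) ∣ ((t + 1 : ℤ) : ℤ_[2])).mul_right _
    have h2 : ¬ (2 : ℤ_[2]) ∣ (2 * (s : ℤ_[2]) * a - (t : ℤ_[2])) := by
      intro hdvd
      have hdt : (2 : ℤ_[2]) ∣ (t : ℤ_[2]) := by
        have h2sa : (2 : ℤ_[2]) ∣ 2 * (s : ℤ_[2]) * a := ⟨(s : ℤ_[2]) * a, by ring⟩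
        have := dvd_sub h2sa hdvd
        simpa using this
      have hlt : ‖((t : ℤ) : ℤ_[2])‖ < 1 := by
        rw [PadicInt.norm_lt_one_iff_dvd]; exact_mod_cast hdt
      rw [PadicInt.norm_int_lt_one_iff_dvd] at hlt
      exact ht2 (by exact_mod_cast hlt)
    obtain ⟨z, hz⟩ := key2 _ _ _ _ h1 h2
    refine ⟨z, ?_⟩
    have e2 : ((m - 2 : ℤ) : ℤ_[2]) = 2 * (s : ℤ_[2]) := by rw [hs]; push_cast; ring
    have e4 : ((m - 4 : ℤ) : ℤ_[2]) = 2 * (t : ℤ_[2]) := by rw [ht]; push_cast; ring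
    rw [e2, e4]
    linear_combination 2 * hz
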